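/- arXiv:2002.07955 — 3 statements merged into one kernel-verified Lean document; each statement's English description precedes it below -/
import Mathlib

section
/- Let n ≥ 1 and let L ⊂ ℝⁿ be the set of all integer combinations of a basis b₁,…,bₙ of ℝⁿ (a full-rank lattice). Let q ≥ 1 be an integer, s > 0 a real number, and ε ∈ (0,1). Assume the Gaussian mass ρ_s is summable on L, and that for every v ∈ L the coset mass satisfies ((1−ε)/(1+ε))·ρ_s(qL) ≤ ρ_s(qL + v) ≤ ρ_s(qL). Then the probability distribution on the quotient group L/qL (which has exactly qⁿ elements) assigning to the coset of v the probability ρ_s(qL+v)/ρ_s(L) is within statistical distance 2ε/(1+ε) of the uniform distribution on L/qL; that is, (1/2)·Σ_{c ∈ L/qL} | ρ_s(c)/ρ_s(L) − q^{−n} | ≤ 2ε/(1+ε), where ρ_s(c) denotes the Gaussian mass of the coset c. -/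
noncomputable def gaussMass {n : ℕ} (s : ℝ) (S : Set (EuclideanSpace ℝ (Fin n))) : ℝ :=
  ∑' x : S, Real.exp (-Real.pi * ‖(x : EuclideanSpace ℝ (Fin n))‖ ^ 2 / s ^ 2)

lemma abs_eq_self_add_two_max (x : ℝ) : |x| = x + 2 * max (-x) 0 := by
  rcases le_total 0 x with h | h
  · rw [abs_of_nonneg h, max_eq_right (by linarith)]; ring
  · rw [abs_of_nonpos h, max_eq_left (by linarith)]; ring

theorem stmt0 {n : ℕ} (hn : 1 ≤ n)
    (b : Module.Basis (Fin n) ℝ (EuclideanSpace ℝ (Fin n)))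
    (L : AddSubgroup (EuclideanSpace ℝ (Fin n)))
    (hL : L = (Submodule.span ℤ (Set.range ⇑b)).toAddSubgroup)
    (q : ℕ) (hq : 1 ≤ q) (s : ℝ) (hs : 0 < s) (ε : ℝ) (hε : ε ∈ Set.Ioo (0 : ℝ) 1)
    (hsum : Summable fun x : L =>
      Real.exp (-Real.pi * ‖(x : EuclideanSpace ℝ (Fin n))‖ ^ 2 / s ^ 2))
    (hcoset : ∀ v : L,
      ((1 - ε) / (1 + ε)) *
          gaussMass s ((fun x => q • x) '' (L : Set (EuclideanSpace ℝ (Fin n))))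
        ≤ gaussMass s ((fun x => x + (v : EuclideanSpace ℝ (Fin n))) ''
            ((fun x => q • x) '' (L : Set (EuclideanSpace ℝ (Fin n))))) ∧
      gaussMass s ((fun x => x + (v : EuclideanSpace ℝ (Fin n))) ''
            ((fun x => q • x) '' (L : Set (EuclideanSpace ℝ (Fin n)))))
        ≤ gaussMass s ((fun x => q • x) '' (L : Set (EuclideanSpace ℝ (Fin n))))) :
    Nat.card (L ⧸ (q • AddMonoidHom.id L).range) = q ^ n ∧
    (1 / 2 : ℝ) * ∑' c : L ⧸ (q • AddMonoidHom.id L).range,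
        |gaussMass s (Subtype.val ''
              {y : L | (QuotientAddGroup.mk y : L ⧸ (q • AddMonoidHom.id L).range) = c}) /
            gaussMass s (L : Set (EuclideanSpace ℝ (Fin n))) - ((q : ℝ) ^ n)⁻¹|
      ≤ 2 * ε / (1 + ε) := by
  obtain ⟨hε0, hε1⟩ := hε
  haveI : NeZero q := ⟨by omega⟩
  -- a ℤ-basis of L
  have hinj : Function.Injective fun r : ℤ => r • (1 : ℝ) := by
    intro a b h; simpa using h
  have li : LinearIndependent ℤ ⇑b := b.linearIndependent.restrict_scalars hinj
  let cb : Module.Basis (Fin n) ℤ ↥(Submodule.span ℤ (Set.range ⇑b)) := Module.Basis.span li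
  subst hL
  set L := (Submodule.span ℤ (Set.range ⇑b)).toAddSubgroup with hLdef
  let e : ↥L ≃+ (Fin n → ℤ) := cb.equivFun.toAddEquiv
  -- the reduction map
  let φ : ↥L →+ (Fin n → ZMod q) := AddMonoidHom.mk' (fun x i => ((e x i : ℤ) : ZMod q))
    (by intro a b; funext i; simp [map_add])
  have hφ : ∀ (x : ↥L) (i : Fin n), φ x i = ((e x i : ℤ) : ZMod q) := fun _ _ => rfl
  have hφsurj : Function.Surjective φ := by
    intro z
    refine ⟨e.symm fun i => (ZMod.intCast_surjective (z i)).choose, ?_⟩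
    funext i
    rw [hφ, AddEquiv.apply_symm_apply]
    exact (ZMod.intCast_surjective (z i)).choose_spec
  have hker : φ.ker = (q • AddMonoidHom.id ↥L).range := by
    ext x
    constructor
    · intro hx
      have hx' : ∀ i, ((q : ℤ)) ∣ e x i := by
        intro i
        have h0 := congrFun (AddMonoidHom.mem_ker.mp hx) i
        rw [hφ] at h0
        exact (ZMod.intCast_zmod_eq_zero_iff_dvd _ q).mp h0
      refine ⟨e.symm fun i => (hx' i).choose, ?_⟩
      rw [AddMonoidHom.nsmul_apply, AddMonoidHom.id_apply]
      apply e.injective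
      rw [map_nsmul, AddEquiv.apply_symm_apply]
      funext i
      have hspec := (hx' i).choose_spec
      simp only [Pi.smul_apply, nsmul_eq_mul]
      omega
    · rintro ⟨y, rfl⟩
      rw [AddMonoidHom.mem_ker]
      funext i
      rw [hφ, AddMonoidHom.nsmul_apply, AddMonoidHom.id_apply, map_nsmul]
      simp only [Pi.smul_apply, nsmul_eq_mul, Pi.zero_apply]
      push_cast
      simp
  -- cardinality
  have card1 : Nat.card (↥L ⧸ (q • AddMonoidHom.id ↥L).range) = q ^ n := by
    rw [← hker,
      Nat.card_congr (QuotientAddGroup.quotientKerEquivOfSurjective φ hφsurj).toEquiv,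
      Nat.card_pi]
    simp [Nat.card_eq_fintype_card, ZMod.card]
  refine ⟨card1, ?_⟩
  -- finiteness of the quotient
  haveI hfin : Finite (↥L ⧸ (q • AddMonoidHom.id ↥L).range) := by
    apply Nat.finite_of_card_ne_zero
    rw [card1]
    positivity
  haveI : Fintype (↥L ⧸ (q • AddMonoidHom.id ↥L).range) := Fintype.ofFinite _
  set Q := ↥L ⧸ (q • AddMonoidHom.id ↥L).range with hQ
  -- setup for the analysis
  set g : EuclideanSpace ℝ (Fin n) → ℝ :=
    fun x => Real.exp (-Real.pi * ‖x‖ ^ 2 / s ^ 2) with hgdef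
  have hgpos : ∀ x, 0 < g x := fun x => Real.exp_pos _
  set F : ↥L → ℝ := fun y => g ↑y with hFdef
  have hF : Summable F := hsum
  set T := ∑' y : ↥L, F y with hTdef
  have hTpos : 0 < T := Summable.tsum_pos hF (fun y => (hgpos _).le) 0 (hgpos _)
  have hgauss_L : gaussMass s (L : Set (EuclideanSpace ℝ (Fin n))) = T := rfl
  set fib : Q → Set ↥L := fun c => {y : ↥L | (QuotientAddGroup.mk y : Q) = c} with hfib
  set f' : Q → ℝ := fun c => ∑' y : fib c, F y with hf'
  have himg : ∀ c : Q, gaussMass s (Subtype.val '' fib c) = f' c := by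
    intro c
    exact tsum_image g Subtype.val_injective.injOn
  have hhs : HasSum f' T := by
    have h := hF.hasSum.tsum_fiberwise (QuotientAddGroup.mk : ↥L → Q)
    convert h using 2 with c
    all_goals rfl
  -- bounds on each coset mass
  set Mq := gaussMass s ((fun x => q • x) '' (L : Set (EuclideanSpace ℝ (Fin n)))) with hMq
  have hbound : ∀ c : Q, ((1 - ε) / (1 + ε)) * Mq ≤ f' c ∧ f' c ≤ Mq := by
    intro c
    obtain ⟨v, rfl⟩ : ∃ v : ↥L, (QuotientAddGroup.mk v : Q) = c :=
      ⟨Quotient.out c, QuotientAddGroup.out_eq' c⟩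
    have hset : Subtype.val '' fib (QuotientAddGroup.mk v)
        = (fun x => x + (v : EuclideanSpace ℝ (Fin n))) ''
            ((fun x => q • x) '' (L : Set (EuclideanSpace ℝ (Fin n)))) := by
      ext x
      simp only [Set.mem_image, Set.mem_setOf_eq, SetLike.mem_coe, hfib]
      constructor
      · rintro ⟨y, hy, rfl⟩
        rw [QuotientAddGroup.eq] at hy
        obtain ⟨z, hz⟩ := hy
        rw [AddMonoidHom.nsmul_apply, AddMonoidHom.id_apply] at hz
        have hy' : q • (-z) + v = y := by
          have : q • (-z) = y - v := by rw [smul_neg, hz]; abel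
          rw [this]; abel
        refine ⟨q • ((-z : ↥L) : EuclideanSpace ℝ (Fin n)), ⟨(-z : ↥L), (-z).2, rfl⟩, ?_⟩
        rw [← hy']
        push_cast
        simp
      · rintro ⟨u, ⟨w, hw, rfl⟩, rfl⟩
        refine ⟨q • (⟨w, hw⟩ : ↥L) + v, ?_, by push_cast; simp⟩
        rw [QuotientAddGroup.eq]
        refine ⟨-⟨w, hw⟩, ?_⟩
        rw [AddMonoidHom.nsmul_apply, AddMonoidHom.id_apply, smul_neg]
        abel
    have hc := hcoset v
    rw [← hset, himg] at hc
    exact hc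
  -- global comparisons
  have hsum_f' : ∑ c : Q, f' c = T := by rw [← hhs.tsum_eq, tsum_fintype]
  set N : ℝ := (q : ℝ) ^ n with hN
  have hNpos : 0 < N := by positivity
  have hcardQ : (Fintype.card Q : ℝ) = N := by
    rw [← Nat.card_eq_fintype_card, card1]; push_cast; rfl
  have hTle : T ≤ N * Mq := by
    rw [← hsum_f']
    calc ∑ c : Q, f' c ≤ ∑ _c : Q, Mq := Finset.sum_le_sum fun c _ => (hbound c).2
      _ = (Fintype.card Q : ℝ) * Mq := by rw [Finset.sum_const, Finset.card_univ]; simp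
      _ = N * Mq := by rw [hcardQ]
  have hMqpos : 0 < Mq := by
    nlinarith
  set α : ℝ := (1 - ε) / (1 + ε) with hα
  have hα0 : 0 ≤ α := div_nonneg (by linarith) (by linarith)
  have hα1 : α ≤ 1 := by
    rw [hα, div_le_one (by linarith)]; linarith
  have hlow : ∀ c : Q, α / N ≤ f' c / T := by
    intro c
    have h1 : α * Mq ≤ f' c := (hbound c).1
    have h2 : α / N = α * Mq / (N * Mq) := by
      field_simp
    rw [h2]
    exact div_le_div₀ (le_trans (by nlinarith) h1) h1 hTpos hTle
  -- final computation
  have hBbd : ∀ c : Q, max (N⁻¹ - f' c / T) 0 ≤ (1 - α) / N := by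
    intro c
    apply max_le
    · have h1 := hlow c
      have h2 : (1 - α) / N = N⁻¹ - α / N := by
        rw [sub_div, one_div]
      linarith
    · exact div_nonneg (by linarith) hNpos.le
  rw [tsum_fintype]
  have hrw : ∀ c : Q, |gaussMass s (Subtype.val '' fib c) / gaussMass s (L : Set (EuclideanSpace ℝ (Fin n))) - N⁻¹|
      = (f' c / T - N⁻¹) + 2 * max (N⁻¹ - f' c / T) 0 := by
    intro c
    rw [himg, hgauss_L, abs_eq_self_add_two_max, neg_sub]
  calc (1 / 2 : ℝ) * ∑ c : Q,
        |gaussMass s (Subtype.val '' fib c) / gaussMass s (L : Set (EuclideanSpace ℝ (Fin n))) - N⁻¹|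
      = (1 / 2) * ((∑ c : Q, (f' c / T - N⁻¹)) + 2 * ∑ c : Q, max (N⁻¹ - f' c / T) 0) := by
        rw [Finset.sum_congr rfl fun c _ => hrw c, Finset.sum_add_distrib, Finset.mul_sum]
    _ = ∑ c : Q, max (N⁻¹ - f' c / T) 0 := by
        have h1 : ∑ c : Q, (f' c / T - N⁻¹) = 0 := by
          rw [Finset.sum_sub_distrib, ← Finset.sum_div, hsum_f', Finset.sum_const,
            Finset.card_univ, nsmul_eq_mul, hcardQ, div_self hTpos.ne',
            mul_inv_cancel₀ hNpos.ne', sub_self]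
        rw [h1]; ring
    _ ≤ ∑ _c : Q, (1 - α) / N := Finset.sum_le_sum fun c _ => hBbd c
    _ = 1 - α := by
        rw [Finset.sum_const, Finset.card_univ, nsmul_eq_mul, hcardQ]
        field_simp
    _ = 2 * ε / (1 + ε) := by
        rw [hα]
        field_simp
        ring
end

section
/- Let G be a finite abelian group, f ≥ 1 an integer, and 𝒴 a nonempty subset of {0,1}^f. For x ∈ G^f and y ∈ {0,1}^f define ⟨x,y⟩ = Σ_{i : y_i = 1} x_i ∈ G. Then the statistical distance between the joint distribution of (⟨X,Y⟩, X) and that of (U, X) — where X is uniform on G^f, Y is uniform on 𝒴 independent of X, and U is uniform on G independent of X — is at most (1/2)·√(|G|/|𝒴|); explicitly, (1/2)·Σ_{x ∈ G^f} Σ_{z ∈ G} | |G|^{−f} · (|{y ∈ 𝒴 : ⟨x,y⟩ = z}| / |𝒴|) − |G|^{−f}·|G|^{−1} | ≤ (1/2)·√(|G|/|𝒴|). -/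
open scoped BigOperators

open Finset in
private def diffHom {G : Type*} [AddCommGroup G] {f : ℕ} (y y' : Fin f → Bool) :
    (Fin f → G) →+ G where
  toFun x := (∑ i, if y i then x i else 0) - (∑ i, if y' i then x i else 0)
  map_zero' := by simp
  map_add' a b := by
    show (∑ i, if y i then (a + b) i else 0) - (∑ i, if y' i then (a + b) i else 0) = _
    have h1 : ∀ c : Fin f → Bool,
        (∑ i, if c i then (a + b) i else 0)
          = (∑ i, if c i then a i else 0) + (∑ i, if c i then b i else 0) := by
      intro c
      rw [← Finset.sum_add_distrib]
      refine Finset.sum_congr rfl fun i _ => ?_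
      by_cases h : c i <;> simp [h]
    rw [h1, h1]; abel

private lemma diffHom_single {G : Type*} [AddCommGroup G] [DecidableEq G] {f : ℕ}
    (y y' : Fin f → Bool) (j : Fin f) (g : G) :
    diffHom y y' (Pi.single j g) = (if y j then g else 0) - (if y' j then g else 0) := by
  simp only [diffHom, AddMonoidHom.coe_mk, ZeroHom.coe_mk]
  congr 1 <;>
  · rw [Finset.sum_eq_single j]
    · simp
    · intro i _ hij
      simp [Pi.single_apply, hij]
    · simp

private lemma diffHom_surj {G : Type*} [AddCommGroup G] [DecidableEq G] {f : ℕ}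
    {y y' : Fin f → Bool} (h : y ≠ y') :
    Function.Surjective (diffHom (G := G) y y') := by
  obtain ⟨j, hj⟩ := Function.ne_iff.mp h
  intro g
  cases hyj : y j <;> cases hy'j : y' j
  · exact absurd (hyj.trans hy'j.symm) hj
  · exact ⟨Pi.single j (-g), by rw [diffHom_single, hyj, hy'j]; simp⟩
  · exact ⟨Pi.single j g, by rw [diffHom_single, hyj, hy'j]; simp⟩
  · exact absurd (hyj.trans hy'j.symm) hj

private lemma count_ne {G : Type*} [AddCommGroup G] [Fintype G] [DecidableEq G] {f : ℕ}
    {y y' : Fin f → Bool} (h : y ≠ y') :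
    (Finset.univ.filter fun x : Fin f → G =>
        (∑ i, if y i then x i else 0) = ∑ i, if y' i then x i else 0).card * Fintype.card G
      = Fintype.card G ^ f := by
  classical
  have hker : (Finset.univ.filter fun x : Fin f → G =>
      (∑ i, if y i then x i else 0) = ∑ i, if y' i then x i else 0)
      = Finset.univ.filter fun x => x ∈ (diffHom (G := G) y y').ker := by
    refine Finset.filter_congr fun x _ => ?_
    simp [AddMonoidHom.mem_ker, diffHom, sub_eq_zero]
  rw [hker]
  have h1 : Nat.card (Fin f → G)
      = Nat.card ((Fin f → G) ⧸ (diffHom (G := G) y y').ker)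
          * Nat.card (diffHom (G := G) y y').ker :=
    AddSubgroup.card_eq_card_quotient_mul_card_addSubgroup _
  have h2 : Nat.card ((Fin f → G) ⧸ (diffHom (G := G) y y').ker) = Nat.card G :=
    Nat.card_congr (QuotientAddGroup.quotientKerEquivOfSurjective _ (diffHom_surj h)).toEquiv
  have h3 : Nat.card (diffHom (G := G) y y').ker
      = (Finset.univ.filter fun x : Fin f → G => x ∈ (diffHom (G := G) y y').ker).card := by
    rw [Nat.card_eq_fintype_card]
    exact Fintype.card_subtype _
  have h4 : Nat.card (Fin f → G) = Fintype.card G ^ f := by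
    simp [Nat.card_eq_fintype_card]
  rw [h4, h2, h3, Nat.card_eq_fintype_card] at h1
  rw [mul_comm]
  exact h1.symm

private lemma sumNsq {G : Type*} [AddCommGroup G] [Fintype G] [DecidableEq G] {f : ℕ}
    (hf : 1 ≤ f) (Y : Finset (Fin f → Bool)) :
    ∑ x : Fin f → G, ∑ z : G,
        ((Y.filter fun y => (∑ i, if y i then x i else 0) = z).card) ^ 2
      ≤ Y.card * Fintype.card G ^ f + Y.card ^ 2 * Fintype.card G ^ (f - 1) := by
  classical
  set v : (Fin f → G) → (Fin f → Bool) → G := fun x y => ∑ i, if y i then x i else 0 with hv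
  have step1 : ∀ x : Fin f → G, ∑ z : G,
      ((Y.filter fun y => v x y = z).card) ^ 2
        = ∑ y ∈ Y, ∑ y' ∈ Y, if v x y = v x y' then 1 else 0 := by
    intro x
    calc ∑ z : G, ((Y.filter fun y => v x y = z).card) ^ 2
        = ∑ z : G, (∑ y ∈ Y, if v x y = z then 1 else 0)
            * (∑ y' ∈ Y, if v x y' = z then 1 else 0) := by
          refine Finset.sum_congr rfl fun z _ => ?_
          rw [sq, Finset.card_filter]
      _ = ∑ z : G, ∑ y ∈ Y, ∑ y' ∈ Y,
            (if v x y = z then 1 else 0) * (if v x y' = z then 1 else 0) := by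
          refine Finset.sum_congr rfl fun z _ => ?_
          rw [Finset.sum_mul_sum]
      _ = ∑ y ∈ Y, ∑ y' ∈ Y, ∑ z : G,
            (if v x y = z then 1 else 0) * (if v x y' = z then 1 else 0) := by
          rw [Finset.sum_comm]
          exact Finset.sum_congr rfl fun y _ => Finset.sum_comm
      _ = ∑ y ∈ Y, ∑ y' ∈ Y, if v x y = v x y' then 1 else 0 := by
          refine Finset.sum_congr rfl fun y _ => Finset.sum_congr rfl fun y' _ => ?_
          simp [ite_and, Finset.sum_ite_eq]
  have step2 : ∑ x : Fin f → G, ∑ z : G,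
      ((Y.filter fun y => v x y = z).card) ^ 2
        = ∑ y ∈ Y, ∑ y' ∈ Y,
            (Finset.univ.filter fun x : Fin f → G => v x y = v x y').card := by
    rw [Finset.sum_congr rfl fun x _ => step1 x, Finset.sum_comm]
    refine Finset.sum_congr rfl fun y _ => ?_
    rw [Finset.sum_comm]
    refine Finset.sum_congr rfl fun y' _ => ?_
    rw [Finset.card_filter]
  rw [step2]
  have hbound : ∀ y ∈ Y, ∀ y' ∈ Y,
      (Finset.univ.filter fun x : Fin f → G => v x y = v x y').card
        ≤ (if y = y' then Fintype.card G ^ f else 0) + Fintype.card G ^ (f - 1) := by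
    intro y _ y' _
    by_cases h : y = y'
    · subst h
      rw [if_pos rfl]
      calc (Finset.univ.filter fun x : Fin f → G => v x y = v x y).card
          ≤ (Finset.univ : Finset (Fin f → G)).card := Finset.card_filter_le _ _
        _ = Fintype.card G ^ f := by simp
        _ ≤ _ := Nat.le_add_right _ _
    · rw [if_neg h, zero_add]
      have h1 := count_ne (G := G) h
      have h2 : Fintype.card G ^ (f - 1) * Fintype.card G = Fintype.card G ^ f := by
        rw [← pow_succ, Nat.sub_add_cancel hf]
      exact le_of_eq (Nat.eq_of_mul_eq_mul_right Fintype.card_pos (h1.trans h2.symm))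
  calc ∑ y ∈ Y, ∑ y' ∈ Y, (Finset.univ.filter fun x : Fin f → G => v x y = v x y').card
      ≤ ∑ y ∈ Y, ∑ y' ∈ Y,
          ((if y = y' then Fintype.card G ^ f else 0) + Fintype.card G ^ (f - 1)) :=
        Finset.sum_le_sum fun y hy => Finset.sum_le_sum fun y' hy' => hbound y hy y' hy'
    _ = ∑ _y ∈ Y, (Fintype.card G ^ f + Y.card * Fintype.card G ^ (f - 1)) := by
        refine Finset.sum_congr rfl fun y hy => ?_
        rw [Finset.sum_add_distrib, Finset.sum_ite_eq Y y fun _ => Fintype.card G ^ f,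
          if_pos hy, Finset.sum_const, smul_eq_mul]
    _ = Y.card * Fintype.card G ^ f + Y.card ^ 2 * Fintype.card G ^ (f - 1) := by
        rw [Finset.sum_const, smul_eq_mul]
        ring

private lemma arith (n m F E T : ℝ) (hn : 0 < n) (hm : 0 < m) (hF : 0 < F)
    (hFE : E * n = F) (hT : T ≤ m * F + m ^ 2 * E) :
    (F * n) * (F⁻¹ ^ 2 / m ^ 2 * T - 2 * F⁻¹ * (F⁻¹ * n⁻¹) / m * (F * m)
        + (F * n) * (F⁻¹ * n⁻¹) ^ 2)
      ≤ n / m := by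
  have key : (F * n) * (F⁻¹ ^ 2 / m ^ 2 * T - 2 * F⁻¹ * (F⁻¹ * n⁻¹) / m * (F * m)
      + (F * n) * (F⁻¹ * n⁻¹) ^ 2) = T * n / (F * m ^ 2) - 1 := by
    field_simp
    ring
  rw [key, sub_le_iff_le_add, div_le_iff₀ (by positivity)]
  have h5 : T * n ≤ (m * F + m ^ 2 * E) * n := mul_le_mul_of_nonneg_right hT hn.le
  have h6 : (m * F + m ^ 2 * E) * n = F * m * n + F * m ^ 2 := by
    rw [show (m * F + m ^ 2 * E) * n = m * (F * n) + m ^ 2 * (E * n) by ring, hFE]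
    ring
  have h7 : (n / m + 1) * (F * m ^ 2) = F * m * n + F * m ^ 2 := by
    field_simp
  linarith

theorem stmt1 (G : Type*) [AddCommGroup G] [Fintype G] [DecidableEq G]
    (f : ℕ) (hf : 1 ≤ f) (Y : Finset (Fin f → Bool)) (hY : Y.Nonempty) :
    (1 / 2 : ℝ) * ∑ x : Fin f → G, ∑ z : G,
        |((Fintype.card G : ℝ))⁻¹ ^ f *
            (((Y.filter fun y => (∑ i, if y i then x i else 0) = z).card : ℝ) / (Y.card : ℝ)) -
          ((Fintype.card G : ℝ))⁻¹ ^ f * (Fintype.card G : ℝ)⁻¹|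
      ≤ (1 / 2) * Real.sqrt ((Fintype.card G : ℝ) / (Y.card : ℝ)) := by
  classical
  have hnR : (0 : ℝ) < Fintype.card G := by exact_mod_cast Fintype.card_pos
  have hmR : (0 : ℝ) < Y.card := by exact_mod_cast Finset.card_pos.mpr hY
  have hFpos : (0 : ℝ) < (Fintype.card G : ℝ) ^ f := by positivity
  have hFE : (Fintype.card G : ℝ) ^ (f - 1) * (Fintype.card G : ℝ)
      = (Fintype.card G : ℝ) ^ f := by
    rw [← pow_succ, Nat.sub_add_cancel hf]
  have hcard : (Fintype.card (Fin f → G) : ℝ) = (Fintype.card G : ℝ) ^ f := by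
    rw [Fintype.card_fun, Fintype.card_fin]
    push_cast
    rfl
  refine mul_le_mul_of_nonneg_left ?_ (by norm_num : (0:ℝ) ≤ 1 / 2)
  rw [Real.le_sqrt (by positivity) (by positivity)]
  -- Cast of the square-counting bound
  have hT : ∑ x : Fin f → G, ∑ z : G,
      (((Y.filter fun y => (∑ i, if y i then x i else 0) = z).card : ℝ)) ^ 2
        ≤ (Y.card : ℝ) * (Fintype.card G : ℝ) ^ f
            + (Y.card : ℝ) ^ 2 * (Fintype.card G : ℝ) ^ (f - 1) := by
    exact_mod_cast sumNsq (G := G) hf Y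
  -- row sums
  have hP1 : ∀ x : Fin f → G, ∑ z : G,
      (((Y.filter fun y => (∑ i, if y i then x i else 0) = z).card : ℝ)) = (Y.card : ℝ) := by
    intro x
    have h : ∑ z : G, (Y.filter fun y => (∑ i, if y i then x i else 0) = z).card = Y.card :=
      (Finset.card_eq_sum_card_fiberwise (fun y _ => Finset.mem_univ _)).symm
    exact_mod_cast h
  have hPsum : ∑ x : Fin f → G, ∑ z : G,
      (((Y.filter fun y => (∑ i, if y i then x i else 0) = z).card : ℝ))
        = (Fintype.card G : ℝ) ^ f * (Y.card : ℝ) := by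
    calc ∑ x : Fin f → G, ∑ z : G,
        (((Y.filter fun y => (∑ i, if y i then x i else 0) = z).card : ℝ))
        = ∑ _x : Fin f → G, (Y.card : ℝ) := Finset.sum_congr rfl fun x _ => hP1 x
      _ = (Fintype.card G : ℝ) ^ f * (Y.card : ℝ) := by
          rw [Finset.sum_const, Finset.card_univ, nsmul_eq_mul, hcard]
  -- expand the square and sum
  have split : ∑ x : Fin f → G, ∑ z : G,
      (((Fintype.card G : ℝ))⁻¹ ^ f *
          (((Y.filter fun y => (∑ i, if y i then x i else 0) = z).card : ℝ) / (Y.card : ℝ)) -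
        ((Fintype.card G : ℝ))⁻¹ ^ f * (Fintype.card G : ℝ)⁻¹) ^ 2
      = ((Fintype.card G : ℝ) ^ f)⁻¹ ^ 2 / (Y.card : ℝ) ^ 2 *
            (∑ x : Fin f → G, ∑ z : G,
              (((Y.filter fun y => (∑ i, if y i then x i else 0) = z).card : ℝ)) ^ 2)
          - 2 * ((Fintype.card G : ℝ) ^ f)⁻¹ *
              (((Fintype.card G : ℝ) ^ f)⁻¹ * (Fintype.card G : ℝ)⁻¹) / (Y.card : ℝ) *
              ((Fintype.card G : ℝ) ^ f * (Y.card : ℝ))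
          + ((Fintype.card G : ℝ) ^ f * (Fintype.card G : ℝ)) *
              (((Fintype.card G : ℝ) ^ f)⁻¹ * (Fintype.card G : ℝ)⁻¹) ^ 2 := by
    rw [← hPsum]
    have e1 : ∀ (x : Fin f → G) (z : G),
        (((Fintype.card G : ℝ))⁻¹ ^ f *
            (((Y.filter fun y => (∑ i, if y i then x i else 0) = z).card : ℝ) / (Y.card : ℝ)) -
          ((Fintype.card G : ℝ))⁻¹ ^ f * (Fintype.card G : ℝ)⁻¹) ^ 2
        = ((Fintype.card G : ℝ) ^ f)⁻¹ ^ 2 / (Y.card : ℝ) ^ 2 *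
              (((Y.filter fun y => (∑ i, if y i then x i else 0) = z).card : ℝ)) ^ 2
            - 2 * ((Fintype.card G : ℝ) ^ f)⁻¹ *
                (((Fintype.card G : ℝ) ^ f)⁻¹ * (Fintype.card G : ℝ)⁻¹) / (Y.card : ℝ) *
                (((Y.filter fun y => (∑ i, if y i then x i else 0) = z).card : ℝ))
            + (((Fintype.card G : ℝ) ^ f)⁻¹ * (Fintype.card G : ℝ)⁻¹) ^ 2 := by
      intro x z
      rw [inv_pow]
      ring
    simp only [e1, Finset.sum_sub_distrib, Finset.sum_add_distrib, ← Finset.mul_sum,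
      Finset.sum_const, Finset.card_univ, nsmul_eq_mul, hcard]
    ring
  calc (∑ x : Fin f → G, ∑ z : G,
        |((Fintype.card G : ℝ))⁻¹ ^ f *
            (((Y.filter fun y => (∑ i, if y i then x i else 0) = z).card : ℝ) / (Y.card : ℝ)) -
          ((Fintype.card G : ℝ))⁻¹ ^ f * (Fintype.card G : ℝ)⁻¹|) ^ 2
      = (∑ p : (Fin f → G) × G,
          |((Fintype.card G : ℝ))⁻¹ ^ f *
              (((Y.filter fun y => (∑ i, if y i then p.1 i else 0) = p.2).card : ℝ) /
                (Y.card : ℝ)) -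
            ((Fintype.card G : ℝ))⁻¹ ^ f * (Fintype.card G : ℝ)⁻¹|) ^ 2 := by
        rw [Fintype.sum_prod_type]
    _ ≤ (Fintype.card ((Fin f → G) × G) : ℝ) * ∑ p : (Fin f → G) × G,
          |((Fintype.card G : ℝ))⁻¹ ^ f *
              (((Y.filter fun y => (∑ i, if y i then p.1 i else 0) = p.2).card : ℝ) /
                (Y.card : ℝ)) -
            ((Fintype.card G : ℝ))⁻¹ ^ f * (Fintype.card G : ℝ)⁻¹| ^ 2 := by
        simpa [Finset.card_univ] using
          sq_sum_le_card_mul_sum_sq (s := Finset.univ)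
            (f := fun p : (Fin f → G) × G =>
              |((Fintype.card G : ℝ))⁻¹ ^ f *
                  (((Y.filter fun y => (∑ i, if y i then p.1 i else 0) = p.2).card : ℝ) /
                    (Y.card : ℝ)) -
                ((Fintype.card G : ℝ))⁻¹ ^ f * (Fintype.card G : ℝ)⁻¹|)
    _ = ((Fintype.card G : ℝ) ^ f * (Fintype.card G : ℝ)) *
          ∑ x : Fin f → G, ∑ z : G,
            (((Fintype.card G : ℝ))⁻¹ ^ f *
                (((Y.filter fun y => (∑ i, if y i then x i else 0) = z).card : ℝ) /
                  (Y.card : ℝ)) -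
              ((Fintype.card G : ℝ))⁻¹ ^ f * (Fintype.card G : ℝ)⁻¹) ^ 2 := by
        rw [Fintype.sum_prod_type]
        simp only [sq_abs]
        rw [Fintype.card_prod, Nat.cast_mul, hcard]
    _ ≤ (Fintype.card G : ℝ) / (Y.card : ℝ) := by
        rw [split]
        exact arith (Fintype.card G : ℝ) (Y.card : ℝ) ((Fintype.card G : ℝ) ^ f)
          ((Fintype.card G : ℝ) ^ (f - 1)) _ hnR hmR hFpos hFE hT
end

section
/- Let d ≥ 1 and K ≥ 1 be integers, let i be an integer with 0 ≤ i < K, and set N' = 80·d²·K and M = N' − 8·i·d. Then binom(N', 8d) / binom(M, 8d) < 5/2; equivalently, 2·binom(N', 8d) < 5·binom(M, 8d). -/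
open Finset

lemma exp89_lt : Real.exp (8 / 9) < 5 / 2 := by
  have h1 : Real.exp (8 / 9) ^ (9 : ℕ) = Real.exp 8 := by
    rw [← Real.exp_nat_mul]; norm_num
  have h2 : Real.exp 8 = Real.exp 1 ^ (8 : ℕ) := by
    rw [← Real.exp_nat_mul]; norm_num
  have h3 := Real.exp_one_lt_d9
  have h4 : Real.exp (8 / 9) ^ (9 : ℕ) < (5 / 2 : ℝ) ^ (9 : ℕ) := by
    rw [h1, h2]
    calc Real.exp 1 ^ (8 : ℕ) < (2.7182818286 : ℝ) ^ (8 : ℕ) :=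
          pow_lt_pow_left₀ h3 (Real.exp_pos 1).le (by norm_num)
      _ < (5 / 2 : ℝ) ^ (9 : ℕ) := by norm_num
  exact lt_of_pow_lt_pow_left₀ 9 (by norm_num) h4

lemma key_pow (d : ℕ) (hd : 1 ≤ d) :
    2 * (10 * d) ^ (8 * d) < 5 * (10 * d - 1) ^ (8 * d) := by
  have h10 : (1 : ℕ) ≤ 10 * d := by omega
  have hcast : ((10 * d - 1 : ℕ) : ℝ) = 10 * (d : ℝ) - 1 := by
    push_cast [Nat.cast_sub h10]; ring
  have hd' : (1 : ℝ) ≤ (d : ℝ) := by exact_mod_cast hd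
  set a : ℝ := 10 * (d : ℝ) - 1 with ha
  have ha9 : (9 : ℝ) ≤ a := by rw [ha]; linarith
  have ha0 : (0 : ℝ) < a := by linarith
  -- (1 + 1/a)^(8d) ≤ exp(8d/a) ≤ exp(8/9) < 5/2
  have h1 : (1 + 1 / a) ^ (8 * d) ≤ Real.exp (1 / a) ^ (8 * d) := by
    apply pow_le_pow_left₀ (by positivity)
    linarith [Real.add_one_le_exp (1 / a)]
  have h2 : Real.exp (1 / a) ^ (8 * d) = Real.exp ((8 * d : ℕ) * (1 / a)) := by
    rw [← Real.exp_nat_mul]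
  have h3 : ((8 * d : ℕ) : ℝ) * (1 / a) ≤ 8 / 9 := by
    rw [mul_one_div, div_le_div_iff₀ ha0 (by norm_num : (0:ℝ) < 9)]
    push_cast
    rw [ha]
    nlinarith
  have h4 : (1 + 1 / a) ^ (8 * d) < 5 / 2 := by
    calc (1 + 1 / a) ^ (8 * d) ≤ Real.exp ((8 * d : ℕ) * (1 / a)) := h2 ▸ h1
      _ ≤ Real.exp (8 / 9) := Real.exp_le_exp.mpr h3
      _ < 5 / 2 := exp89_lt
  have hsum : ((10 * d : ℕ) : ℝ) = a + 1 := by push_cast; rw [ha]; ring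
  have hmain : (2 : ℝ) * (a + 1) ^ (8 * d) < 5 * a ^ (8 * d) := by
    have hap : (0 : ℝ) < a ^ (8 * d) := pow_pos ha0 _
    have : (a + 1) ^ (8 * d) = a ^ (8 * d) * (1 + 1 / a) ^ (8 * d) := by
      rw [← mul_pow]; congr 1; field_simp
    rw [this]
    nlinarith
  have hfin : (2 : ℝ) * ((10 * d : ℕ) : ℝ) ^ (8 * d) < 5 * ((10 * d - 1 : ℕ) : ℝ) ^ (8 * d) := by
    rw [hsum, hcast]; exact hmain
  exact_mod_cast hfin

theorem stmt3 (d K i : ℕ) (hd : 1 ≤ d) (hK : 1 ≤ K) (hi : i < K) :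
    2 * (80 * d ^ 2 * K).choose (8 * d) < 5 * (80 * d ^ 2 * K - 8 * i * d).choose (8 * d) := by
  set n := 80 * d ^ 2 * K with hn
  set m := 80 * d ^ 2 * K - 8 * i * d with hm
  set k := 8 * d with hk
  have hiK : i + 1 ≤ K := hi
  have hdd : d ≤ d ^ 2 := Nat.le_self_pow two_ne_zero d
  have hsub : 8 * i * d + 8 * d ≤ n := by
    have h1 : 8 * i * d + 8 * d = 8 * (i + 1) * d := by ring
    have h2 : 8 * (i + 1) * d ≤ 8 * K * d :=
      Nat.mul_le_mul_right d (Nat.mul_le_mul_left 8 hiK)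
    have h3 : 8 * K * d ≤ 80 * d ^ 2 * K := by
      calc 8 * K * d = 8 * d * K := by ring
        _ ≤ 80 * d ^ 2 * K := Nat.mul_le_mul_right K (by linarith)
    omega
  have hkm : k ≤ m := by
    rw [hm]
    omega
  -- factorwise inequality
  have hfac : ∀ j ∈ range k, (n - j) * (10 * d - 1) ≤ (m - j) * (10 * d) := by
    intro j hj
    have hjk : j < k := mem_range.mp hj
    have h1 : 8 * i * d ≤ n := by omega
    have h2 : j ≤ n - 8 * i * d := by omega
    have h3 : j ≤ n := by omega
    have hd10 : 1 ≤ 10 * d := by omega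
    have hkey : 80 * i * d ^ 2 + j ≤ n := by
      have ha : 80 * d ^ 2 * (i + 1) ≤ 80 * d ^ 2 * K :=
        Nat.mul_le_mul_left (80 * d ^ 2) hiK
      have hjd : j < 8 * d := hjk
      rw [hn]
      nlinarith
    have hkeyZ : (80 * i * d ^ 2 + j : ℤ) ≤ (n : ℤ) := by exact_mod_cast hkey
    have hjm : j ≤ m := by omega
    have hnZ : ((n : ℕ) : ℤ) = 80 * (d : ℤ) ^ 2 * (K : ℤ) := by
      rw [hn]; push_cast; ring
    zify [h1, h2, h3, hjm, hd10, hm]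
    push_cast at hkeyZ ⊢
    rw [hnZ] at hkeyZ ⊢
    have e : ((80 * d ^ 2 * K - 8 * i * d - j : ℕ) : ℤ) = 80 * (d:ℤ) ^ 2 * K - 8 * i * d - j := by
      rw [Nat.cast_sub (by omega), Nat.cast_sub (by omega)]; push_cast; ring
    rw [e]
    nlinarith [hkeyZ]
  have hprod : n.descFactorial k * (10 * d - 1) ^ k ≤ m.descFactorial k * (10 * d) ^ k := by
    calc n.descFactorial k * (10 * d - 1) ^ k
        = ∏ j ∈ range k, (n - j) * (10 * d - 1) := by
          rw [Finset.prod_mul_distrib, Nat.descFactorial_eq_prod_range,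
            Finset.prod_const, Finset.card_range]
      _ ≤ ∏ j ∈ range k, (m - j) * (10 * d) := Finset.prod_le_prod' hfac
      _ = m.descFactorial k * (10 * d) ^ k := by
          rw [Finset.prod_mul_distrib, Nat.descFactorial_eq_prod_range,
            Finset.prod_const, Finset.card_range]
  have hmpos : 0 < m.descFactorial k := by
    rcases Nat.eq_zero_or_pos (m.descFactorial k) with h | h
    · exact absurd (Nat.descFactorial_eq_zero_iff_lt.mp h) (not_lt.mpr hkm)
    · exact h
  have hkeypow : 2 * (10 * d) ^ k < 5 * (10 * d - 1) ^ k := key_pow d hd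
  have hdesc : 2 * n.descFactorial k < 5 * m.descFactorial k := by
    have hpow_pos : 0 < (10 * d - 1) ^ k := Nat.pow_pos (by omega)
    have chain : 2 * n.descFactorial k * (10 * d - 1) ^ k
        < 5 * m.descFactorial k * (10 * d - 1) ^ k := by
      calc 2 * n.descFactorial k * (10 * d - 1) ^ k
          = 2 * (n.descFactorial k * (10 * d - 1) ^ k) := by ring
        _ ≤ 2 * (m.descFactorial k * (10 * d) ^ k) := Nat.mul_le_mul_left 2 hprod
        _ = m.descFactorial k * (2 * (10 * d) ^ k) := by ring
        _ < m.descFactorial k * (5 * (10 * d - 1) ^ k) :=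
            mul_lt_mul_of_pos_left hkeypow hmpos
        _ = 5 * m.descFactorial k * (10 * d - 1) ^ k := by ring
    exact Nat.lt_of_mul_lt_mul_right chain
  rw [Nat.descFactorial_eq_factorial_mul_choose, Nat.descFactorial_eq_factorial_mul_choose] at hdesc
  have hmul : k.factorial * (2 * n.choose k) < k.factorial * (5 * m.choose k) := by
    calc k.factorial * (2 * n.choose k) = 2 * (k.factorial * n.choose k) := by ring
      _ < 5 * (k.factorial * m.choose k) := hdesc
      _ = k.factorial * (5 * m.choose k) := by ring
  exact Nat.lt_of_mul_lt_mul_left hmul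
end
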